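/- Given matrices L_I and R_I (I = 1,...,N) of size d×d satisfying the garden algebra relations L_I R_J + L_J R_I = 2δ_{IJ} I_d and R_I L_J + R_J L_I = 2δ_{IJ} I_d, the 2d×2d matrices γ̂_I = ((1/2)(σ¹ + iσ²)) ⊗ L_I + ((1/2)(σ¹ − iσ²)) ⊗ R_I satisfy the Clifford algebra relations {γ̂_I, γ̂_J} = 2δ_{IJ} I_{2d}. -/
import Mathlib


open Matrix Kronecker

theorem garden_to_clifford (d N : ℕ)
    (L R : Fin N → Matrix (Fin d) (Fin d) ℂ)
    (h1 : ∀ I J, L I * R J + L J * R I =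
      if I = J then (2 : ℂ) • (1 : Matrix (Fin d) (Fin d) ℂ) else 0)
    (h2 : ∀ I J, R I * L J + R J * L I =
      if I = J then (2 : ℂ) • (1 : Matrix (Fin d) (Fin d) ℂ) else 0) :
    let σ1 : Matrix (Fin 2) (Fin 2) ℂ := !![0, 1; 1, 0]
    let σ2 : Matrix (Fin 2) (Fin 2) ℂ := !![0, -Complex.I; Complex.I, 0]
    let γ : Fin N → Matrix (Fin 2 × Fin d) (Fin 2 × Fin d) ℂ := fun I =>
      ((1 / 2 : ℂ) • (σ1 + Complex.I • σ2)) ⊗ₖ L I +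
      ((1 / 2 : ℂ) • (σ1 - Complex.I • σ2)) ⊗ₖ R I
    ∀ I J, γ I * γ J + γ J * γ I =
      if I = J then (2 : ℂ) • (1 : Matrix (Fin 2 × Fin d) (Fin 2 × Fin d) ℂ) else 0 := by
  intro σ1 σ2 γ I J
  have hA : (1 / 2 : ℂ) • (σ1 + Complex.I • σ2) = !![0, 1; 0, 0] := by
    simp only [σ1, σ2]
    ext i j
    fin_cases i <;> fin_cases j <;>
      simp [Matrix.smul_apply, Complex.ext_iff] <;> ring_nf <;>
      simp [Complex.ext_iff]
  have hB : (1 / 2 : ℂ) • (σ1 - Complex.I • σ2) = !![0, 0; 1, 0] := by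
    simp only [σ1, σ2]
    ext i j
    fin_cases i <;> fin_cases j <;>
      simp [Matrix.smul_apply, Complex.ext_iff] <;> ring_nf <;>
      simp [Complex.ext_iff]
  set A : Matrix (Fin 2) (Fin 2) ℂ := !![0, 1; 0, 0] with hAdef
  set B : Matrix (Fin 2) (Fin 2) ℂ := !![0, 0; 1, 0] with hBdef
  have hAA : A * A = 0 := by
    ext i j; fin_cases i <;> fin_cases j <;> simp [hAdef, Matrix.mul_apply, Fin.sum_univ_two]
  have hBB : B * B = 0 := by
    ext i j; fin_cases i <;> fin_cases j <;> simp [hBdef, Matrix.mul_apply, Fin.sum_univ_two]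
  have hABBA : A * B + B * A = 1 := by
    ext i j; fin_cases i <;> fin_cases j <;>
      simp [hAdef, hBdef, Matrix.mul_apply, Fin.sum_univ_two, Matrix.one_apply]
  have hγ : ∀ K, γ K = A ⊗ₖ L K + B ⊗ₖ R K := by
    intro K; simp only [γ, hA, hB]
  rw [hγ, hγ]
  have expand : ∀ K M : Fin N,
      (A ⊗ₖ L K + B ⊗ₖ R K) * (A ⊗ₖ L M + B ⊗ₖ R M) =
      (A * B) ⊗ₖ (L K * R M) + (B * A) ⊗ₖ (R K * L M) := by
    intro K M
    rw [add_mul, mul_add, mul_add, ← Matrix.mul_kronecker_mul, ← Matrix.mul_kronecker_mul,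
      ← Matrix.mul_kronecker_mul, ← Matrix.mul_kronecker_mul, hAA, hBB,
      Matrix.zero_kronecker, Matrix.zero_kronecker]
    abel
  rw [expand, expand]
  have : (A * B) ⊗ₖ (L I * R J) + (B * A) ⊗ₖ (R I * L J) +
      ((A * B) ⊗ₖ (L J * R I) + (B * A) ⊗ₖ (R J * L I)) =
      (A * B) ⊗ₖ (L I * R J + L J * R I) + (B * A) ⊗ₖ (R I * L J + R J * L I) := by
    rw [Matrix.kronecker_add, Matrix.kronecker_add]; abel
  rw [this, h1, h2]
  by_cases h : I = J
  · subst h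
    rw [if_pos rfl, if_pos rfl, Matrix.kronecker_smul, Matrix.kronecker_smul, ← smul_add,
      ← Matrix.add_kronecker, hABBA, Matrix.one_kronecker_one]
  · simp [h]
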